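/- Let ξ ∈ K†. There exists a pair (a,b) ≠ (0,0) of restricted power series over K† satisfying the system a = ξ·t·τ(a) + τ(b) and b = τ(a) if and only if ‖ξ‖ < 1. (Equivalently: the rank-2 effective t-motif M_ξ with σ(e₁) = ξ t e₁ + e₂, σ(e₂) = e₁ has a nonzero σ-invariant vector in M_ξ ⊗ K†{t} exactly when ‖ξ‖ < 1.) -/

import Mathlib

/-!
STATEMENT 11. `K†` (= `Kd`) is an algebraically closed field of characteristic `p`
containing the finite field `k` with `q = p ^ n` elements, complete w.r.t. a nontrivial
nonarchimedean absolute value.  Restricted power series are those whose coefficients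
tend to `0`; `τ` raises every coefficient to the `q`-th power.

Statement: for `ξ ∈ K†`, there exists a pair `(a, b) ≠ (0, 0)` of restricted power
series with `a = ξ·t·τ(a) + τ(b)` and `b = τ(a)` if and only if `‖ξ‖ < 1`.
(The rank-2 t-motif `M_ξ` has a nonzero σ-invariant vector in `M_ξ ⊗ K†{t}` exactly
when `‖ξ‖ < 1`.)
-/

/-- Restricted power series: the coefficients tend to `0`. -/
def IsRestricted (Kd : Type) [NormedField Kd] (f : PowerSeries Kd) : Prop :=
  Filter.Tendsto (fun i => ‖(PowerSeries.coeff (R := Kd) i) f‖) Filter.atTop (nhds 0)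

/-- If `0 < t`, `t ^ m = t` and `2 ≤ m`, then `t = 1`. -/
lemma aux_pow_eq_self {t : ℝ} (ht : 0 < t) {m : ℕ} (hm : 2 ≤ m) (h : t ^ m = t) : t = 1 := by
  rcases lt_trichotomy t 1 with h1 | h1 | h1
  · have := pow_lt_pow_right_of_lt_one₀ ht h1 (show 1 < m by omega)
    rw [pow_one, h] at this
    exact absurd this (lt_irrefl t)
  · exact h1
  · have := pow_lt_pow_right₀ h1 (show 1 < m by omega)
    rw [pow_one, h] at this
    exact absurd this (lt_irrefl t)

/-- In a complete ultrametric field, norm-null sequences are summable. -/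
lemma aux_summable {Kd : Type} [NontriviallyNormedField Kd] [CompleteSpace Kd]
    [IsUltrametricDist Kd] {f : ℕ → Kd}
    (hf : Filter.Tendsto (fun k => ‖f k‖) Filter.atTop (nhds 0)) : Summable f := by
  rw [summable_iff_vanishing_norm]
  intro ε hε
  obtain ⟨N, hN⟩ := (Metric.tendsto_atTop.mp hf (ε / 2) (half_pos hε))
  refine ⟨Finset.range N, fun t ht => ?_⟩
  have hb : ∀ i ∈ t, ‖f i‖ ≤ ε / 2 := by
    intro i hi
    have hiN : N ≤ i := by
      by_contra h
      exact (Finset.disjoint_left.mp ht hi) (Finset.mem_range.mpr (by omega))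
    have := hN i hiN
    rw [Real.dist_eq, sub_zero, abs_of_nonneg (norm_nonneg _)] at this
    exact this.le
  exact lt_of_le_of_lt
    (IsUltrametricDist.norm_sum_le_of_forall_le_of_nonneg (by positivity) hb)
    (half_lt_self hε)

theorem stmt_11
    (p n : ℕ) [Fact p.Prime] (hn : 0 < n)
    (Kd : Type) [NontriviallyNormedField Kd] [CompleteSpace Kd] [IsAlgClosed Kd]
    [CharP Kd p]
    (hna : IsNonarchimedean (fun x : Kd => ‖x‖))
    (ξ : Kd) :
    (∃ a b : PowerSeries Kd, (a, b) ≠ (0, 0) ∧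
        IsRestricted Kd a ∧ IsRestricted Kd b ∧
        a = PowerSeries.C (R := Kd) ξ * PowerSeries.X *
              PowerSeries.map (iterateFrobenius Kd p n) a +
            PowerSeries.map (iterateFrobenius Kd p n) b ∧
        b = PowerSeries.map (iterateFrobenius Kd p n) a) ↔
      ‖ξ‖ < 1 := by
  classical
  haveI : IsUltrametricDist Kd :=
    IsUltrametricDist.isUltrametricDist_of_isNonarchimedean_norm hna
  set q := p ^ n with hqdef
  set φ := iterateFrobenius Kd p n with hφdef
  have hφ : ∀ x : Kd, φ x = x ^ q := fun x => rfl
  have hp2 : 2 ≤ p := (Fact.out : p.Prime).two_le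
  have hq2 : 2 ≤ q := by
    calc 2 ≤ p := hp2
    _ = p ^ 1 := (pow_one p).symm
    _ ≤ p ^ n := Nat.pow_le_pow_right (by omega) hn
  have hqq2 : 2 ≤ q * q := le_trans hq2 (Nat.le_mul_of_pos_left q (by omega))
  constructor
  · rintro ⟨a, b, hab, ha, hb, heq1, heq2⟩
    by_contra hξ
    push_neg at hξ
    rw [heq2] at heq1
    set A : ℕ → Kd := fun m => PowerSeries.coeff (R := Kd) m a with hA
    -- coefficient equations
    have hc : ∀ (m : ℕ) (f : PowerSeries Kd),
        PowerSeries.coeff (R := Kd) m (PowerSeries.map φ f) = (PowerSeries.coeff (R := Kd) m f) ^ q := by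
      intro m f; rw [PowerSeries.coeff_map, hφ]
    have key0 : A 0 = (A 0) ^ (q * q) := by
      have := congrArg (PowerSeries.coeff (R := Kd) 0) heq1
      rw [map_add, mul_assoc, PowerSeries.coeff_C_mul, PowerSeries.coeff_zero_X_mul,
        hc, hc, mul_zero, zero_add, ← pow_mul] at this
      exact this
    have keyS : ∀ m : ℕ, A (m + 1) = ξ * (A m) ^ q + (A (m + 1)) ^ (q * q) := by
      intro m
      have := congrArg (PowerSeries.coeff (R := Kd) (m + 1)) heq1
      rw [map_add, mul_assoc, PowerSeries.coeff_C_mul, PowerSeries.coeff_succ_X_mul,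
        hc, hc, hc, ← pow_mul] at this
      exact this
    -- a ≠ 0
    have hane : a ≠ 0 := by
      intro h
      apply hab
      rw [h] at heq2 ⊢
      rw [heq2]
      simp
    obtain ⟨m, hm, hmin⟩ : ∃ m, A m ≠ 0 ∧ ∀ k < m, A k = 0 := by
      have hex : ∃ m, A m ≠ 0 := by
        by_contra h
        push_neg at h
        exact hane (PowerSeries.ext fun m => by simpa using h m)
      exact ⟨Nat.find hex, Nat.find_spec hex, fun k hk => by
        have := Nat.find_min hex hk; simpa using this⟩
    -- base : ‖A m‖ = 1
    have hbase : ‖A m‖ = 1 := by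
      have hself : A m = (A m) ^ (q * q) := by
        cases m with
        | zero => exact key0
        | succ k =>
          have := keyS k
          rw [hmin k (Nat.lt_succ_self k), zero_pow (by omega), mul_zero, zero_add] at this
          exact this
      have := congrArg norm hself
      rw [norm_pow] at this
      exact aux_pow_eq_self (norm_pos_iff.mpr hm) hqq2 this.symm
    -- induction : 1 ≤ ‖A (m + k)‖
    have hind : ∀ k, 1 ≤ ‖A (m + k)‖ := by
      intro k
      induction k with
      | zero => simpa using hbase.ge
      | succ k ih =>
        by_contra hlt
        push_neg at hlt
        have hkey := keyS (m + k)
        have hxi : A (m + k + 1) - (A (m + k + 1)) ^ (q * q) = ξ * (A (m + k)) ^ q :=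
          sub_eq_of_eq_add hkey
        have h1 : 1 ≤ ‖ξ * (A (m + k)) ^ q‖ := by
          rw [norm_mul, norm_pow]
          exact one_le_mul_of_one_le_of_one_le hξ (one_le_pow₀ ih)
        have h2 : ‖A (m + k + 1) - (A (m + k + 1)) ^ (q * q)‖ < 1 := by
          rw [sub_eq_add_neg]
          refine lt_of_le_of_lt (hna _ _) (max_lt ?_ ?_)
          · exact hlt
          · show ‖-(A (m + k + 1) ^ (q * q))‖ < 1
            rw [norm_neg, norm_pow]
            exact pow_lt_one₀ (norm_nonneg _) hlt (by omega)
        rw [← hxi] at h1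
        exact absurd h1 (not_le.mpr h2)
    -- contradiction with restrictedness
    have ha' : Filter.Tendsto (fun i => ‖A i‖) Filter.atTop (nhds 0) := ha
    rw [Metric.tendsto_atTop] at ha'
    obtain ⟨N, hN⟩ := ha' 1 one_pos
    have := hN (m + N) (by omega)
    rw [Real.dist_eq, sub_zero, abs_of_nonneg (norm_nonneg _)] at this
    exact absurd (hind N) (not_le.mpr this)
  · intro hξ
    set ψ := iterateFrobenius Kd p (2 * n) with hψdef
    have hψ : ∀ x : Kd, ψ x = x ^ (q * q) := by
      intro x
      rw [iterateFrobenius_def, hqdef, two_mul, pow_add]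
    have hψc : Continuous ψ := by
      have : ⇑ψ = fun x : Kd => x ^ (q * q) := funext hψ
      rw [this]
      exact continuous_pow _
    set F : Kd → Kd := fun c => ∑' k : ℕ, c ^ ((q * q) ^ k) with hF
    have hterm : ∀ c : Kd, ‖c‖ < 1 → ∀ k, ‖c ^ ((q * q) ^ k)‖ ≤ ‖c‖ := by
      intro c hc k
      rw [norm_pow]
      calc ‖c‖ ^ (q * q) ^ k ≤ ‖c‖ ^ 1 :=
        pow_le_pow_of_le_one (norm_nonneg c) hc.le (Nat.one_le_pow _ _ (by omega))
      _ = ‖c‖ := pow_one _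
    have hsum : ∀ c : Kd, ‖c‖ < 1 → Summable (fun k : ℕ => c ^ ((q * q) ^ k)) := by
      intro c hc
      apply aux_summable
      apply squeeze_zero (fun k => norm_nonneg _) (g := fun k => ‖c‖ ^ k)
      · intro k
        rw [norm_pow]
        exact pow_le_pow_of_le_one (norm_nonneg c) hc.le
          (le_of_lt (Nat.lt_pow_self (show 1 < q * q by omega) : k < (q * q) ^ k))
      · exact tendsto_pow_atTop_nhds_zero_of_lt_one (norm_nonneg c) hc
    have hFle : ∀ c : Kd, ‖c‖ < 1 → ‖F c‖ ≤ ‖c‖ := fun c hc =>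
      IsUltrametricDist.norm_tsum_le_of_forall_le_of_nonneg (norm_nonneg c) (hterm c hc)
    have hFeq : ∀ c : Kd, ‖c‖ < 1 → F c = c + (F c) ^ (q * q) := by
      intro c hc
      have hs := hsum c hc
      have h1 : (F c) ^ (q * q) = ∑' k : ℕ, c ^ ((q * q) ^ (k + 1)) := by
        calc (F c) ^ (q * q) = ψ (F c) := (hψ _).symm
        _ = ∑' k : ℕ, ψ (c ^ ((q * q) ^ k)) := hs.map_tsum ψ hψc
        _ = ∑' k : ℕ, c ^ ((q * q) ^ (k + 1)) := by
          congr 1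
          funext k
          rw [hψ, ← pow_mul, ← pow_succ]
      have h2 : F c = c + ∑' k : ℕ, c ^ ((q * q) ^ (k + 1)) := by
        simpa [pow_zero, pow_one] using Summable.tsum_eq_zero_add hs
      rw [h1]
      exact h2
    -- the recursive coefficient sequence
    set g : ℕ → Kd := fun m => Nat.rec (1 : Kd) (fun _ x => F (ξ * x ^ q)) m with hgdef
    have hg0 : g 0 = 1 := rfl
    have hgS : ∀ m, g (m + 1) = F (ξ * (g m) ^ q) := fun m => rfl
    have hle1 : ∀ m : ℕ, ‖ξ‖ ^ m ≤ 1 := fun m => pow_le_one₀ (norm_nonneg ξ) hξ.le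
    have hgle : ∀ m, ‖g m‖ ≤ ‖ξ‖ ^ m := by
      intro m
      induction m with
      | zero => simp [hg0]
      | succ m ih =>
        have hgm1 : ‖g m‖ ≤ 1 := le_trans ih (hle1 m)
        have hcle : ‖ξ * (g m) ^ q‖ ≤ ‖ξ‖ * ‖g m‖ := by
          rw [norm_mul, norm_pow]
          refine mul_le_mul_of_nonneg_left ?_ (norm_nonneg ξ)
          calc ‖g m‖ ^ q ≤ ‖g m‖ ^ 1 :=
            pow_le_pow_of_le_one (norm_nonneg _) hgm1 (by omega)
          _ = ‖g m‖ := pow_one _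
        have hclt : ‖ξ * (g m) ^ q‖ < 1 :=
          lt_of_le_of_lt hcle (lt_of_le_of_lt
            (by calc ‖ξ‖ * ‖g m‖ ≤ ‖ξ‖ * 1 :=
                  mul_le_mul_of_nonneg_left hgm1 (norm_nonneg ξ)
                _ = ‖ξ‖ := mul_one _) hξ)
        calc ‖g (m + 1)‖ = ‖F (ξ * (g m) ^ q)‖ := by rw [hgS]
        _ ≤ ‖ξ * (g m) ^ q‖ := hFle _ hclt
        _ ≤ ‖ξ‖ * ‖g m‖ := hcle
        _ ≤ ‖ξ‖ * ‖ξ‖ ^ m := mul_le_mul_of_nonneg_left ih (norm_nonneg ξ)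
        _ = ‖ξ‖ ^ (m + 1) := (pow_succ' _ _).symm
    have hclt : ∀ m, ‖ξ * (g m) ^ q‖ < 1 := by
      intro m
      have hgm1 : ‖g m‖ ≤ 1 := le_trans (hgle m) (hle1 m)
      calc ‖ξ * (g m) ^ q‖ = ‖ξ‖ * ‖g m‖ ^ q := by rw [norm_mul, norm_pow]
      _ ≤ ‖ξ‖ * 1 := mul_le_mul_of_nonneg_left
            (pow_le_one₀ (norm_nonneg _) hgm1) (norm_nonneg ξ)
      _ = ‖ξ‖ := mul_one _
      _ < 1 := hξ
    have hgeq0 : g 0 = (g 0) ^ (q * q) := by rw [hg0, one_pow]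
    have hgeqS : ∀ m, g (m + 1) = ξ * (g m) ^ q + (g (m + 1)) ^ (q * q) := by
      intro m
      rw [hgS m]
      exact hFeq _ (hclt m)
    refine ⟨PowerSeries.mk g, PowerSeries.map φ (PowerSeries.mk g), ?_, ?_, ?_, ?_, rfl⟩
    · intro h
      have h1 : PowerSeries.mk g = 0 := (Prod.ext_iff.mp h).1
      have := congrArg (PowerSeries.coeff (R := Kd) 0) h1
      rw [PowerSeries.coeff_mk, hg0, map_zero] at this
      exact one_ne_zero this
    · unfold IsRestricted
      simp only [PowerSeries.coeff_mk]
      exact squeeze_zero (fun i => norm_nonneg _) hgle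
        (tendsto_pow_atTop_nhds_zero_of_lt_one (norm_nonneg ξ) hξ)
    · unfold IsRestricted
      simp only [PowerSeries.coeff_map, PowerSeries.coeff_mk]
      refine squeeze_zero (fun i => norm_nonneg _) (fun i => ?_)
        (tendsto_pow_atTop_nhds_zero_of_lt_one (norm_nonneg ξ) hξ)
      have hgm1 : ‖g i‖ ≤ 1 := le_trans (hgle i) (hle1 i)
      calc ‖φ (g i)‖ = ‖g i‖ ^ q := by rw [hφ, norm_pow]
      _ ≤ ‖g i‖ ^ 1 := pow_le_pow_of_le_one (norm_nonneg _) hgm1 (by omega)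
      _ = ‖g i‖ := pow_one _
      _ ≤ ‖ξ‖ ^ i := hgle i
    · ext m
      cases m with
      | zero =>
        simp only [map_add, mul_assoc, PowerSeries.coeff_C_mul,
          PowerSeries.coeff_zero_X_mul, PowerSeries.coeff_map, PowerSeries.coeff_mk,
          hφ, mul_zero, zero_add, ← pow_mul]
        exact hgeq0
      | succ m =>
        simp only [map_add, mul_assoc, PowerSeries.coeff_C_mul,
          PowerSeries.coeff_succ_X_mul, PowerSeries.coeff_map, PowerSeries.coeff_mk,
          hφ, ← pow_mul]
        exact hgeqS m
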